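/- (Upper bound of γ.) Let S = 2^{-n/2} Σ_α c_α Q_α with c_α ∈ ℂ and Σ_α |c_α|² = 1, let γ > 0, and let ρ be a (1+n)-qubit density matrix (positive semidefinite with trace 1) whose upper-right block (⟨0|⊗I)ρ(|1⟩⊗I) equals γS. Then γ · Σ_β |d_β| ≤ 1/2, where d_β = 2^{-n/2} Σ_α (−1)^{α·β} c_α is the Hadamard transform of the coefficient vector (c_α). Equivalently, γ ≤ 1/(2 Σ_β |⟨β| H^{⊗n} |ψ_S⟩|) where |ψ_S⟩ = Σ_α c_α |α⟩. -/

import Mathlib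

open Matrix Kronecker BigOperators
open scoped ComplexOrder

/-- Bitstrings of length `n`. -/
abbrev BV (n : ℕ) : Type := Fin n → ZMod 2

/-- Single-qubit basis index. -/
abbrev Q2 : Type := ZMod 2

/-- The Pauli X-string `Q_α`: `(Q_α)_{ij} = 1` iff `j = i ⊕ α`. -/
def Qx {n : ℕ} (α : BV n) : Matrix (BV n) (BV n) ℂ :=
  Matrix.of fun i j => if j = i + α then 1 else 0

/-- The upper-right block `(⟨0|⊗I) ρ (|1⟩⊗I)` of a `(1+n)`-qubit matrix. -/
def upperRight {n : ℕ} (ρ : Matrix (Q2 × BV n) (Q2 × BV n) ℂ) :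
    Matrix (BV n) (BV n) ℂ :=
  Matrix.of fun i j => ρ (0, i) (1, j)

/-! helper lemmas -/

def χ (x : ZMod 2) : ℂ := (-1) ^ x.val

lemma χ_add (x y : ZMod 2) : χ (x + y) = χ x * χ y := by
  simp only [χ]
  rw [ZMod.val_add, ← neg_one_pow_eq_pow_mod_two, pow_add]

lemma χ_mul_self (x : ZMod 2) : χ x * χ x = 1 := by
  fin_cases x <;> simp [χ, ZMod.val]

lemma χ_real (x : ZMod 2) : starRingEnd ℂ (χ x) = χ x := by
  fin_cases x <;> simp [χ]

lemma χ_sum {ι : Type*} (s : Finset ι) (f : ι → ZMod 2) :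
    χ (∑ k ∈ s, f k) = ∏ k ∈ s, χ (f k) := by
  induction s using Finset.cons_induction with
  | empty => simp [χ]
  | cons a s ha ih => simp [Finset.sum_cons, Finset.prod_cons, χ_add, ih]

lemma sum_zmod2 (f : ZMod 2 → ℂ) : ∑ x : ZMod 2, f x = f 0 + f 1 :=
  Fin.sum_univ_two f

lemma sum_χ (x : ZMod 2) : ∑ j : ZMod 2, χ (x * j) = if x = 0 then 2 else 0 := by
  rw [sum_zmod2, mul_zero, mul_one]
  simp only [χ, ZMod.val_zero, pow_zero]
  have hx : x = 0 ∨ x = 1 := by revert x; decide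
  rcases hx with rfl | rfl <;> simp [show ZMod.val (1:ZMod 2) = 1 from rfl] <;> norm_num

lemma orth {n : ℕ} (a : BV n) :
    ∑ β : BV n, χ (∑ k, a k * β k) = if a = 0 then 2 ^ n else 0 := by
  simp_rw [fun β : BV n => χ_sum Finset.univ (fun k => a k * β k)]
  rw [← Fintype.piFinset_univ,
    Finset.sum_prod_piFinset (Finset.univ : Finset (ZMod 2)) (fun k j => χ (a k * j))]
  simp_rw [sum_χ]
  by_cases ha : a = 0
  · simp [ha]
  · obtain ⟨k, hk⟩ : ∃ k, a k ≠ 0 := by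
      by_contra h; push_neg at h; exact ha (funext h)
    rw [if_neg ha, Finset.prod_eq_zero (Finset.mem_univ k) (by simp [hk])]

lemma z2add (a b : ZMod 2) : a + (a + b) = b := by revert a b; decide
lemma z2zero (a b : ZMod 2) : a + b = 0 ↔ a = b := by revert a b; decide

lemma bv_eq_iff {n : ℕ} (i j α : BV n) : (j = i + α) ↔ (α = i + j) := by
  constructor
  · rintro rfl; funext k; exact (z2add (i k) (α k)).symm
  · rintro rfl; funext k; exact (z2add (i k) (j k)).symm

lemma bv_addadd {n : ℕ} (i α : BV n) : i + (i + α) = α :=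
  funext fun k => z2add (i k) (α k)

lemma bv_add_eq_zero_iff {n : ℕ} (i j : BV n) : i + j = 0 ↔ i = j := by
  rw [funext_iff, funext_iff]
  exact forall_congr' fun k => z2zero _ _

lemma χ_dot_add {n : ℕ} (i j β : BV n) :
    χ (∑ k, i k * β k) * χ (∑ k, j k * β k) = χ (∑ k, (i + j) k * β k) := by
  rw [← χ_add]
  congr 1
  rw [← Finset.sum_add_distrib]
  exact Finset.sum_congr rfl fun k _ => by simp [add_mul]

lemma sum_e_mul {n : ℕ} (i j : BV n) :
    ∑ β : BV n, χ (∑ k, i k * β k) * χ (∑ k, j k * β k)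
      = if i = j then (2:ℂ) ^ n else 0 := by
  simp_rw [χ_dot_add, orth, bv_add_eq_zero_iff]

lemma card_bv (n : ℕ) : Fintype.card (BV n) = 2 ^ n := by
  simp [Fintype.card_fun]

lemma block_entry {n : ℕ} (c : BV n → ℂ) (i j : BV n) :
    (∑ α, c α • Qx α) i j = c (i + j) := by
  rw [Matrix.sum_apply]
  simp only [Matrix.smul_apply, Qx, Matrix.of_apply, smul_eq_mul,
    mul_ite, mul_one, mul_zero]
  rw [Finset.sum_congr rfl (fun α _ => if_congr (bv_eq_iff i j α) rfl rfl)]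
  rw [Finset.sum_ite_eq' (Finset.univ) (i + j) c]
  simp

lemma dot_eval {n : ℕ} (ρ : Matrix (Q2 × BV n) (Q2 × BV n) ℂ) (u v : BV n → ℂ)
    (a b : Q2) :
    star (fun p : Q2 × BV n => if p.1 = a then u p.2 else 0) ⬝ᵥ
      ρ *ᵥ (fun p : Q2 × BV n => if p.1 = b then v p.2 else 0)
    = ∑ i, ∑ j, starRingEnd ℂ (u i) * ρ (a, i) (b, j) * v j := by
  simp only [dotProduct, Matrix.mulVec, dotProduct, Pi.star_apply, Fintype.sum_prod_type,
    apply_ite, star_zero, ite_mul, mul_ite, zero_mul, mul_zero,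
    Finset.sum_ite_eq, Finset.sum_ite_eq', Finset.mem_univ, if_true]
  simp [Finset.mul_sum, RCLike.star_def, mul_comm, mul_assoc, mul_left_comm]

lemma herm_conj {m : Type*} [Fintype m] (M : Matrix m m ℂ) (hM : M.IsHermitian)
    (x y : m → ℂ) :
    star y ⬝ᵥ M *ᵥ x = starRingEnd ℂ (star x ⬝ᵥ M *ᵥ y) := by
  calc star y ⬝ᵥ M *ᵥ x = (star y ᵥ* M) ⬝ᵥ x := Matrix.dotProduct_mulVec _ _ _
    _ = star (M *ᵥ y) ⬝ᵥ x := by rw [Matrix.star_mulVec, hM.eq]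
    _ = star (M *ᵥ y) ⬝ᵥ star (star x) := by rw [star_star]
    _ = star (star x ⬝ᵥ M *ᵥ y) := Matrix.star_dotProduct_star _ _
    _ = starRingEnd ℂ (star x ⬝ᵥ M *ᵥ y) := rfl

lemma psd_offdiag {m : Type*} [Fintype m] (M : Matrix m m ℂ) (hM : M.PosSemidef)
    (x y : m → ℂ) :
    ‖star x ⬝ᵥ M *ᵥ y‖
      ≤ ((star x ⬝ᵥ M *ᵥ x).re + (star y ⬝ᵥ M *ᵥ y).re) / 2 := by
  set z := star x ⬝ᵥ M *ᵥ y with hz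
  have hxx : (0:ℝ) ≤ (star x ⬝ᵥ M *ᵥ x).re := hM.re_dotProduct_nonneg x
  have hyy : (0:ℝ) ≤ (star y ⬝ᵥ M *ᵥ y).re := hM.re_dotProduct_nonneg y
  by_cases h0 : z = 0
  · rw [h0]; simp; linarith
  · set t : ℂ := -(starRingEnd ℂ) z / ‖z‖ with ht
    have hzabs : (‖z‖ : ℂ) ≠ 0 := by simpa using h0
    have key : (0:ℝ) ≤ (star (x + t • y) ⬝ᵥ M *ᵥ (x + t • y)).re :=
      hM.re_dotProduct_nonneg (x + t • y)
    have expand : star (x + t • y) ⬝ᵥ M *ᵥ (x + t • y)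
        = star x ⬝ᵥ M *ᵥ x + t * z + starRingEnd ℂ t * (star y ⬝ᵥ M *ᵥ x)
          + (starRingEnd ℂ t * t) * (star y ⬝ᵥ M *ᵥ y) := by
      rw [star_add, star_smul]
      simp only [Matrix.mulVec_add, Matrix.mulVec_smul, add_dotProduct,
        smul_dotProduct, dotProduct_add, dotProduct_smul,
        smul_eq_mul, RCLike.star_def]
      ring
    have hcj : star y ⬝ᵥ M *ᵥ x = starRingEnd ℂ z := herm_conj M hM.1 x y
    have htz : t * z = -(‖z‖ : ℂ) := by
      rw [ht]
      field_simp
      rw [mul_comm, Complex.mul_conj, Complex.normSq_eq_norm_sq]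
      push_cast; ring
    have htt : starRingEnd ℂ t * t = 1 := by
      rw [ht, map_div₀, map_neg, Complex.conj_conj, Complex.conj_ofReal]
      field_simp
      rw [Complex.mul_conj, Complex.normSq_eq_norm_sq]
      push_cast; ring
    have htcz : starRingEnd ℂ t * starRingEnd ℂ z = -(‖z‖ : ℂ) := by
      rw [← _root_.map_mul, htz, map_neg, Complex.conj_ofReal]
    rw [expand, hcj, htz, htcz, htt, one_mul] at key
    simp only [Complex.add_re, Complex.neg_re, Complex.ofReal_re] at key
    linarith

lemma sum_comm3 {ι κ μ M : Type*} [AddCommMonoid M] [Fintype ι] [Fintype κ] [Fintype μ]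
    (f : ι → κ → μ → M) :
    ∑ a, ∑ b, ∑ c, f a b c = ∑ b, ∑ c, ∑ a, f a b c := by
  rw [Finset.sum_comm]
  exact Finset.sum_congr rfl fun _ _ => Finset.sum_comm


/-- Upper bound of `γ`: for a density matrix `ρ` whose upper-right block is `γS`
with `S = 2^{-n/2} ∑ c_α Q_α` and `∑|c_α|² = 1`, we have
`γ · ∑_β |d_β| ≤ 1/2`, where `d_β = 2^{-n/2} ∑_α (-1)^{α·β} c_α` is the Hadamard
transform of the coefficient vector. -/
theorem gamma_upper_bound {n : ℕ} (c : BV n → ℂ)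
    (hc : ∑ α, ‖c α‖ ^ 2 = 1)
    (γ : ℝ) (hγ : 0 < γ)
    (ρ : Matrix (Q2 × BV n) (Q2 × BV n) ℂ)
    (hpsd : ρ.PosSemidef) (htr : ρ.trace = 1)
    (hblock : upperRight ρ
      = (γ : ℂ) • ((Real.sqrt 2 : ℂ)⁻¹ ^ n • ∑ α, c α • Qx α)) :
    γ * ∑ β : BV n, ‖
        ((Real.sqrt 2 : ℂ)⁻¹ ^ n *
          ∑ α, (-1 : ℂ) ^ (∑ k, α k * β k : ZMod 2).val * c α)‖ ≤ 1 / 2 := by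
  set s : ℂ := (Real.sqrt 2 : ℂ)⁻¹ with hs
  set D : BV n → ℂ := fun β => s ^ n * ∑ α, χ (∑ k, α k * β k) * c α with hD
  -- the goal is about D
  show γ * ∑ β : BV n, ‖D β‖ ≤ 1 / 2
  -- entries of the upper-right block
  have hent : ∀ i j : BV n, ρ ((0:Q2), i) ((1:Q2), j) = (γ:ℂ) * (s ^ n * c (i + j)) := by
    intro i j
    have h := congrFun (congrFun hblock i) j
    simpa [upperRight, Matrix.smul_apply, smul_eq_mul, block_entry] using h
  -- value of the off-diagonal quadratic form
  have hval : ∀ β : BV n,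
      star (fun p : Q2 × BV n => if p.1 = 0 then χ (∑ k, p.2 k * β k) else 0) ⬝ᵥ
        ρ *ᵥ (fun p : Q2 × BV n => if p.1 = 1 then χ (∑ k, p.2 k * β k) else 0)
      = (γ:ℂ) * (2:ℂ) ^ n * D β := by
    intro β
    rw [dot_eval ρ (fun i => χ (∑ k, i k * β k)) (fun i => χ (∑ k, i k * β k)) 0 1]
    simp_rw [hent, χ_real]
    have hrow : ∀ i : BV n,
        ∑ j : BV n, χ (∑ k, i k * β k) * ((γ:ℂ) * (s ^ n * c (i + j))) * χ (∑ k, j k * β k)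
        = (γ:ℂ) * D β := by
      intro i
      rw [← Equiv.sum_comp (Equiv.addLeft i)
        (fun j => χ (∑ k, i k * β k) * ((γ:ℂ) * (s ^ n * c (i + j))) * χ (∑ k, j k * β k))]
      simp only [Equiv.coe_addLeft]
      have hterm : ∀ α : BV n,
          χ (∑ k, i k * β k) * ((γ:ℂ) * (s ^ n * c (i + (i + α)))) * χ (∑ k, (i + α) k * β k)
          = (γ:ℂ) * (s ^ n * (χ (∑ k, α k * β k) * c α)) := by
        intro α
        rw [bv_addadd]
        have h1 : χ (∑ k, (i + α) k * β k)
            = χ (∑ k, i k * β k) * χ (∑ k, α k * β k) := (χ_dot_add i α β).symm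
        rw [h1]
        have h2 := χ_mul_self (∑ k, i k * β k)
        linear_combination ((γ:ℂ) * s ^ n * c α * χ (∑ k, α k * β k)) * h2
      rw [Finset.sum_congr rfl fun α _ => hterm α, ← Finset.mul_sum, hD]
      rw [← Finset.mul_sum]
    rw [Finset.sum_congr rfl fun i _ => hrow i, Finset.sum_const, Finset.card_univ, card_bv]
    simp only [nsmul_eq_mul, Nat.cast_pow, Nat.cast_ofNat]
    ring
  -- the diagonal sums
  have hdiag : ∀ a : Q2,
      ∑ β : BV n, (star (fun p : Q2 × BV n => if p.1 = a then χ (∑ k, p.2 k * β k) else 0) ⬝ᵥ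
        ρ *ᵥ (fun p : Q2 × BV n => if p.1 = a then χ (∑ k, p.2 k * β k) else 0))
      = (2:ℂ) ^ n * ∑ i : BV n, ρ (a, i) (a, i) := by
    intro a
    have : ∀ β : BV n, (star (fun p : Q2 × BV n => if p.1 = a then χ (∑ k, p.2 k * β k) else 0) ⬝ᵥ
        ρ *ᵥ (fun p : Q2 × BV n => if p.1 = a then χ (∑ k, p.2 k * β k) else 0))
        = ∑ i, ∑ j, ρ (a, i) (a, j) * (χ (∑ k, i k * β k) * χ (∑ k, j k * β k)) := by
      intro β
      rw [dot_eval ρ (fun i => χ (∑ k, i k * β k)) (fun i => χ (∑ k, i k * β k)) a a]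
      simp_rw [χ_real]
      exact Finset.sum_congr rfl fun i _ => Finset.sum_congr rfl fun j _ => by ring
    simp_rw [this]
    have hswap := sum_comm3 (M := ℂ)
      (fun (β i j : BV n) => ρ (a, i) (a, j) * (χ (∑ k, i k * β k) * χ (∑ k, j k * β k)))
    rw [hswap]
    have inner : ∀ i j : BV n,
        ∑ β : BV n, ρ (a, i) (a, j) * (χ (∑ k, i k * β k) * χ (∑ k, j k * β k))
        = ρ (a, i) (a, j) * (if i = j then (2:ℂ) ^ n else 0) := by
      intro i j; rw [← Finset.mul_sum, sum_e_mul]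
    simp_rw [inner, mul_ite, mul_zero]
    rw [Finset.sum_congr rfl (fun i _ => Finset.sum_ite_eq (Finset.univ) i
      (fun j => ρ (a, i) (a, j) * (2:ℂ) ^ n))]
    simp [Finset.mul_sum, mul_comm]
  -- trace identity
  have htrace : ∑ i : BV n, ρ ((0:Q2), i) ((0:Q2), i) + ∑ i : BV n, ρ ((1:Q2), i) ((1:Q2), i) = 1 := by
    have h := htr
    rw [Matrix.trace] at h
    simp only [Matrix.diag] at h
    rw [Fintype.sum_prod_type, sum_zmod2 (fun q => ∑ i : BV n, ρ (q, i) (q, i))] at h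
    exact h
  -- per-β bound and summation
  have hper : ∀ β : BV n, γ * (2:ℝ) ^ n * ‖D β‖
      ≤ (((star (fun p : Q2 × BV n => if p.1 = 0 then χ (∑ k, p.2 k * β k) else 0) ⬝ᵥ
          ρ *ᵥ (fun p : Q2 × BV n => if p.1 = 0 then χ (∑ k, p.2 k * β k) else 0)).re
        + (star (fun p : Q2 × BV n => if p.1 = 1 then χ (∑ k, p.2 k * β k) else 0) ⬝ᵥ
          ρ *ᵥ (fun p : Q2 × BV n => if p.1 = 1 then χ (∑ k, p.2 k * β k) else 0)).re) / 2) := by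
    intro β
    have h := psd_offdiag ρ hpsd
      (fun p : Q2 × BV n => if p.1 = 0 then χ (∑ k, p.2 k * β k) else 0)
      (fun p : Q2 × BV n => if p.1 = 1 then χ (∑ k, p.2 k * β k) else 0)
    rw [hval β] at h
    calc γ * (2:ℝ) ^ n * ‖D β‖
        = ‖(γ:ℂ) * (2:ℂ) ^ n * D β‖ := by
          rw [norm_mul ((γ:ℂ) * 2 ^ n) (D β),
            norm_mul (γ:ℂ) (2 ^ n), Complex.norm_real, Real.norm_eq_abs,
            abs_of_pos hγ, norm_pow, Complex.norm_two]
      _ ≤ _ := h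
  have hsum := Finset.sum_le_sum (fun β (_ : β ∈ Finset.univ) => hper β)
  rw [← Finset.mul_sum] at hsum
  have hrhs : ∑ β : BV n,
      (((star (fun p : Q2 × BV n => if p.1 = 0 then χ (∑ k, p.2 k * β k) else 0) ⬝ᵥ
          ρ *ᵥ (fun p : Q2 × BV n => if p.1 = 0 then χ (∑ k, p.2 k * β k) else 0)).re
        + (star (fun p : Q2 × BV n => if p.1 = 1 then χ (∑ k, p.2 k * β k) else 0) ⬝ᵥ
          ρ *ᵥ (fun p : Q2 × BV n => if p.1 = 1 then χ (∑ k, p.2 k * β k) else 0)).re) / 2)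
      = (2:ℝ) ^ n / 2 := by
    rw [← Finset.sum_div, Finset.sum_add_distrib, ← Complex.re_sum, ← Complex.re_sum,
      hdiag 0, hdiag 1]
    have hkey : (2:ℂ) ^ n * ∑ i : BV n, ρ ((0:Q2), i) ((0:Q2), i)
        + (2:ℂ) ^ n * ∑ i : BV n, ρ ((1:Q2), i) ((1:Q2), i) = (2:ℂ) ^ n := by
      rw [← mul_add, htrace, mul_one]
    rw [← Complex.add_re, hkey,
      show ((2:ℂ) ^ n) = (((2:ℝ) ^ n : ℝ) : ℂ) by push_cast; ring, Complex.ofReal_re]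
  rw [hrhs] at hsum
  have h2n : (0:ℝ) < (2:ℝ) ^ n := by positivity
  have : (γ * ∑ β : BV n, ‖D β‖) * (2:ℝ) ^ n ≤ (1/2) * (2:ℝ) ^ n := by
    calc (γ * ∑ β : BV n, ‖D β‖) * (2:ℝ) ^ n
        = γ * (2:ℝ) ^ n * ∑ β : BV n, ‖D β‖ := by ring
      _ ≤ (2:ℝ) ^ n / 2 := hsum
      _ = (1/2) * (2:ℝ) ^ n := by ring
  exact le_of_mul_le_mul_right this h2n
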